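/- Let n ≥ 3 and d ≥ 1, let θ : Fin n → ℝ and p : Fin n × Fin n → [0,1], and consider the Bernoulli-Plackett-Luce model with edge indicators a_{ij}. Fix an index j, vectors x_1,…,x_n ∈ ℝ^d, real weights w_{ij} for i ≠ j, a vector b_j ∈ ℝ^d, and a symmetric positive definite matrix Σ_j ∈ ℝ^{d×d}. Let μ_j = b_j + Σ_{i ≠ j} a_{ij} w_{ij} x_i and let μ̄_j = b_j + Σ_{i ≠ j} E[a_{ij}] w_{ij} x_i. Then E[⟨Σ_j⁻¹(x_j − μ_j), x_j − μ_j⟩] = ⟨Σ_j⁻¹(x_j − μ̄_j), x_j − μ̄_j⟩ + Σ_{i ≠ j} E[a_{ij}](1 − E[a_{ij}]) w_{ij}² ⟨Σ_j⁻¹ x_i, x_i⟩ + Σ_{i ≠ j} Σ_{k ≠ j, k ≠ i} (E[a_{ij}] w_{ij})(E[a_{kj}] w_{kj}) · (exp(θ_j)/(exp(θ_i)+exp(θ_j)+exp(θ_k))) · ⟨Σ_j⁻¹ x_i, x_k⟩, where E[a_{ij}] = p_{ij} · exp(θ_i)/(exp(θ_i)+exp(θ_j)) and the expectation is over the Bernoulli-Plackett-Luce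 model. -/

import Mathlib

open Finset

/-- The Plackett-Luce probability of a permutation `π` of `{1,…,n}` with logits `θ`. -/
noncomputable def plackettLuce {n : ℕ} (θ : Fin n → ℝ) (π : Equiv.Perm (Fin n)) : ℝ :=
  ∏ k : Fin n,
    Real.exp (θ (π k)) / ∑ u ∈ Finset.univ.filter (fun u => k ≤ u), Real.exp (θ (π u))

/-- Joint probability of a `(permutation, edge mask)` sample under the
Bernoulli-Plackett-Luce model. -/
noncomputable def bplProb {n : ℕ} (θ : Fin n → ℝ) (p : Fin n → Fin n → ℝ)
    (ω : Equiv.Perm (Fin n) × (Fin n → Fin n → Bool)) : ℝ :=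
  plackettLuce θ ω.1 * ∏ i : Fin n, ∏ j : Fin n, (if ω.2 i j then p i j else 1 - p i j)

/-- The edge indicator `a_{ij} = b_{ij} · 1[π⁻¹(i) < π⁻¹(j)]`. -/
def bplEdge {n : ℕ} (i j : Fin n)
    (ω : Equiv.Perm (Fin n) × (Fin n → Fin n → Bool)) : ℝ :=
  if ω.2 i j ∧ ω.1.symm i < ω.1.symm j then 1 else 0

/-- The expected edge probability `E[a_{ij}] = p_{ij} · e^{θ_i}/(e^{θ_i}+e^{θ_j})`. -/
noncomputable def bplEdgeExp {n : ℕ} (θ : Fin n → ℝ) (p : Fin n → Fin n → ℝ)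
    (i j : Fin n) : ℝ :=
  p i j * (Real.exp (θ i) / (Real.exp (θ i) + Real.exp (θ j)))

lemma sum_comp_g {n : ℕ} (p : Fin (n+1)) (F : Fin (n+1) → ℝ) :
    ∑ m : Fin n, F (Equiv.swap 0 p m.succ) = ∑ u ∈ Finset.univ.erase p, F u := by
  have h1 : ∑ u : Fin (n+1), F (Equiv.swap 0 p u)
      = F (Equiv.swap 0 p 0) + ∑ m : Fin n, F (Equiv.swap 0 p m.succ) :=
    Fin.sum_univ_succ _
  rw [Equiv.sum_comp (Equiv.swap 0 p) F, Equiv.swap_apply_left] at h1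
  have h2 : ∑ u : Fin (n+1), F u = F p + ∑ u ∈ Finset.univ.erase p, F u :=
    (Finset.add_sum_erase _ F (Finset.mem_univ p)).symm
  rw [h2] at h1
  linarith

lemma sum_filter_succ {n : ℕ} (k : Fin n) (G : Fin (n+1) → ℝ) :
    ∑ u ∈ Finset.univ.filter (fun u => k.succ ≤ u), G u
      = ∑ m ∈ Finset.univ.filter (fun m => k ≤ m), G m.succ := by
  refine Finset.sum_nbij' (i := fun (u : Fin (n+1)) => (⟨u.1 - 1, by have := u.2; have := k.2; omega⟩ : Fin n))
    (j := Fin.succ) ?_ ?_ ?_ ?_ ?_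
  · intro u hu
    simp only [Finset.mem_filter, Finset.mem_univ, true_and, Fin.le_def, Fin.val_succ,
      Fin.val_mk] at *
    omega
  · intro m hm
    simp only [Finset.mem_filter, Finset.mem_univ, true_and, Fin.le_def, Fin.val_succ,
      Fin.val_mk] at *
    omega
  · intro u hu
    simp only [Finset.mem_filter, Finset.mem_univ, true_and, Fin.le_def, Fin.val_succ,
      Fin.val_mk] at hu
    simp only [Fin.ext_iff, Fin.val_succ, Fin.val_mk]
    omega
  · intro m hm
    simp only [Fin.ext_iff, Fin.val_succ, Fin.val_mk]
    omega
  · intro u hu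
    simp only [Finset.mem_filter, Finset.mem_univ, true_and, Fin.le_def, Fin.val_succ,
      Fin.val_mk] at hu
    congr 1
    simp only [Fin.ext_iff, Fin.val_succ, Fin.val_mk]
    omega

lemma pl_decompose {n : ℕ} (θ : Fin (n+1) → ℝ) (p : Fin (n+1)) (e : Equiv.Perm (Fin n)) :
    plackettLuce θ (Equiv.Perm.decomposeFin.symm (p, e))
      = Real.exp (θ p) / (∑ u : Fin (n+1), Real.exp (θ u))
        * plackettLuce (fun m => θ (Equiv.swap 0 p m.succ)) e := by
  unfold plackettLuce
  rw [Fin.prod_univ_succ]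
  congr 1
  · congr 1
    · rw [Equiv.Perm.decomposeFin_symm_apply_zero]
    · have : (Finset.univ.filter (fun u : Fin (n+1) => (0:Fin (n+1)) ≤ u)) = Finset.univ := by
        ext u; simp [Fin.zero_le]
      rw [this]
      exact Equiv.sum_comp (Equiv.Perm.decomposeFin.symm (p, e)) (fun u => Real.exp (θ u))
  · apply Finset.prod_congr rfl
    intro k _
    congr 1
    · rw [Equiv.Perm.decomposeFin_symm_apply_succ]
    · rw [sum_filter_succ]
      apply Finset.sum_congr rfl
      intro m _
      rw [Equiv.Perm.decomposeFin_symm_apply_succ]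

lemma pl_total_pos {n : ℕ} (θ : Fin (n+1) → ℝ) : 0 < ∑ u : Fin (n+1), Real.exp (θ u) :=
  Finset.sum_pos (fun u _ => Real.exp_pos _) ⟨0, Finset.mem_univ 0⟩

lemma pl_sum : ∀ (n : ℕ) (θ : Fin n → ℝ), ∑ π : Equiv.Perm (Fin n), plackettLuce θ π = 1 := by
  intro n
  induction n with
  | zero =>
    intro θ
    have : ∀ π : Equiv.Perm (Fin 0), plackettLuce θ π = 1 := by
      intro π; unfold plackettLuce; simp
    simp only [this, Finset.sum_const, Finset.card_univ, nsmul_eq_mul, mul_one]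
    simp [Fintype.card_perm]
  | succ n ih =>
    intro θ
    rw [← Equiv.sum_comp Equiv.Perm.decomposeFin.symm (plackettLuce θ), Fintype.sum_prod_type]
    have hT := pl_total_pos θ
    have key : ∀ p : Fin (n+1),
        ∑ e : Equiv.Perm (Fin n), plackettLuce θ (Equiv.Perm.decomposeFin.symm (p, e))
          = Real.exp (θ p) / (∑ u : Fin (n+1), Real.exp (θ u)) := by
      intro p
      simp only [pl_decompose]
      rw [← Finset.mul_sum, ih, mul_one]
    simp only [key]
    rw [← Finset.sum_div, div_self (ne_of_gt hT)]

lemma dec_symm_succ {n : ℕ} (p : Fin (n+1)) (e : Equiv.Perm (Fin n)) (m : Fin n) :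
    (Equiv.Perm.decomposeFin.symm (p, e)).symm (Equiv.swap 0 p m.succ) = (e.symm m).succ := by
  rw [Equiv.symm_apply_eq, Equiv.Perm.decomposeFin_symm_apply_succ, Equiv.apply_symm_apply]

lemma dec_symm_zero {n : ℕ} (p : Fin (n+1)) (e : Equiv.Perm (Fin n)) :
    (Equiv.Perm.decomposeFin.symm (p, e)).symm p = 0 := by
  rw [Equiv.symm_apply_eq, Equiv.Perm.decomposeFin_symm_apply_zero]

lemma g_exists {n : ℕ} (p i : Fin (n+1)) (h : i ≠ p) :
    ∃ i' : Fin n, Equiv.swap 0 p i'.succ = i := by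
  have h0 : Equiv.swap 0 p i ≠ 0 := by
    intro hc
    apply h
    have := congrArg (Equiv.swap 0 p) hc
    simpa [Equiv.swap_apply_self, Equiv.swap_apply_left] using this
  obtain ⟨i', hi'⟩ := Fin.exists_succ_eq.mpr h0
  exact ⟨i', by rw [hi', Equiv.swap_apply_self]⟩

lemma pl_marg2 : ∀ (n : ℕ) (θ : Fin n → ℝ) (i j : Fin n), i ≠ j →
    ∑ π : Equiv.Perm (Fin n),
        plackettLuce θ π * (if π.symm i < π.symm j then 1 else 0)
      = Real.exp (θ i) / (Real.exp (θ i) + Real.exp (θ j)) := by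
  intro n
  induction n with
  | zero => intro θ i; exact absurd i.2 (by omega)
  | succ n ih =>
    intro θ i j hij
    rw [← Equiv.sum_comp Equiv.Perm.decomposeFin.symm
        (fun π => plackettLuce θ π * (if π.symm i < π.symm j then 1 else 0)),
      Fintype.sum_prod_type]
    have hT := pl_total_pos θ
    set T := ∑ u : Fin (n+1), Real.exp (θ u) with hTdef
    set r := Real.exp (θ i) / (Real.exp (θ i) + Real.exp (θ j)) with hrdef
    have key : ∀ p : Fin (n+1),
        (∑ e : Equiv.Perm (Fin n),
          plackettLuce θ (Equiv.Perm.decomposeFin.symm (p, e)) *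
            (if (Equiv.Perm.decomposeFin.symm (p, e)).symm i
                < (Equiv.Perm.decomposeFin.symm (p, e)).symm j then 1 else 0))
        = Real.exp (θ p) / T * (if p = i then 1 else if p = j then 0 else r) := by
      intro p
      by_cases hpi : p = i
      · subst hpi
        obtain ⟨j', hj'⟩ := g_exists p j (Ne.symm hij)
        have hind : ∀ e : Equiv.Perm (Fin n),
            (if (Equiv.Perm.decomposeFin.symm (p, e)).symm p
                < (Equiv.Perm.decomposeFin.symm (p, e)).symm j then (1:ℝ) else 0) = 1 := by
          intro e
          rw [dec_symm_zero, ← hj', dec_symm_succ, if_pos (Fin.succ_pos _)]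
        simp only [hind, mul_one, if_pos rfl]
        simp only [pl_decompose]
        rw [← Finset.mul_sum, pl_sum, mul_one]
        simp [hTdef]
      · by_cases hpj : p = j
        · subst hpj
          obtain ⟨i', hi'⟩ := g_exists p i (fun h => hpi h.symm)
          have hind : ∀ e : Equiv.Perm (Fin n),
              (if (Equiv.Perm.decomposeFin.symm (p, e)).symm i
                  < (Equiv.Perm.decomposeFin.symm (p, e)).symm p then (1:ℝ) else 0) = 0 := by
            intro e
            rw [dec_symm_zero, ← hi', dec_symm_succ, if_neg (Fin.not_lt_zero _)]
          simp only [hind, mul_zero, Finset.sum_const_zero, if_neg hpi, if_pos rfl, mul_zero]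
          simp
        · obtain ⟨i', hi'⟩ := g_exists p i (fun h => hpi h.symm)
          obtain ⟨j', hj'⟩ := g_exists p j (fun h => hpj h.symm)
          have hij' : i' ≠ j' := by
            intro h; apply hij; rw [← hi', ← hj', h]
          have hind : ∀ e : Equiv.Perm (Fin n),
              (if (Equiv.Perm.decomposeFin.symm (p, e)).symm i
                  < (Equiv.Perm.decomposeFin.symm (p, e)).symm j then (1:ℝ) else 0)
              = (if e.symm i' < e.symm j' then (1:ℝ) else 0) := by
            intro e
            rw [← hi', ← hj', dec_symm_succ, dec_symm_succ]
            simp [Fin.succ_lt_succ_iff]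
          simp only [hind, pl_decompose, mul_assoc]
          rw [← Finset.mul_sum, ih _ i' j' hij']
          rw [if_neg hpi, if_neg hpj, hi', hj', hrdef]
    simp only [key]
    rw [← Finset.add_sum_erase _ _ (Finset.mem_univ i), if_pos rfl, mul_one]
    have hji : j ∈ Finset.univ.erase i := Finset.mem_erase.mpr ⟨Ne.symm hij, Finset.mem_univ j⟩
    rw [← Finset.add_sum_erase _ _ hji, if_neg (Ne.symm hij), if_pos rfl, mul_zero]
    have hrest : ∀ q ∈ (Finset.univ.erase i).erase j,
        Real.exp (θ q) / T * (if q = i then (1:ℝ) else if q = j then 0 else r)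
          = Real.exp (θ q) / T * r := by
      intro q hq
      rw [Finset.mem_erase, Finset.mem_erase] at hq
      rw [if_neg hq.2.1, if_neg hq.1]
    rw [Finset.sum_congr rfl hrest]
    have hsum : ∑ q ∈ (Finset.univ.erase i).erase j, Real.exp (θ q)
        = T - Real.exp (θ i) - Real.exp (θ j) := by
      have h1 : T = Real.exp (θ i) + ∑ q ∈ Finset.univ.erase i, Real.exp (θ q) :=
        (Finset.add_sum_erase _ _ (Finset.mem_univ i)).symm
      have h2 : ∑ q ∈ Finset.univ.erase i, Real.exp (θ q)
          = Real.exp (θ j) + ∑ q ∈ (Finset.univ.erase i).erase j, Real.exp (θ q) :=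
        (Finset.add_sum_erase _ _ hji).symm
      rw [h2] at h1
      linarith
    have hEnd : ∑ q ∈ (Finset.univ.erase i).erase j, Real.exp (θ q) / T * r
        = (T - Real.exp (θ i) - Real.exp (θ j)) / T * r := by
      rw [← hsum, Finset.sum_div, Finset.sum_mul]
    rw [hEnd, hrdef]
    have hij2 : 0 < Real.exp (θ i) + Real.exp (θ j) := by positivity
    field_simp
    ring

lemma pl_marg3 : ∀ (n : ℕ) (θ : Fin n → ℝ) (i j k : Fin n), i ≠ j → k ≠ j → i ≠ k →
    ∑ π : Equiv.Perm (Fin n),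
        plackettLuce θ π * ((if π.symm i < π.symm j then 1 else 0)
          * (if π.symm k < π.symm j then 1 else 0))
      = (Real.exp (θ i) / (Real.exp (θ i) + Real.exp (θ j)))
        * (Real.exp (θ k) / (Real.exp (θ k) + Real.exp (θ j)))
        * (1 + Real.exp (θ j) / (Real.exp (θ i) + Real.exp (θ j) + Real.exp (θ k))) := by
  intro n
  induction n with
  | zero => intro θ i; exact absurd i.2 (by omega)
  | succ n ih =>
    intro θ i j k hij hkj hik
    rw [← Equiv.sum_comp Equiv.Perm.decomposeFin.symm
        (fun π => plackettLuce θ π * ((if π.symm i < π.symm j then 1 else 0)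
          * (if π.symm k < π.symm j then 1 else 0))),
      Fintype.sum_prod_type]
    have hT := pl_total_pos θ
    set T := ∑ u : Fin (n+1), Real.exp (θ u) with hTdef
    set q := (Real.exp (θ i) / (Real.exp (θ i) + Real.exp (θ j)))
        * (Real.exp (θ k) / (Real.exp (θ k) + Real.exp (θ j)))
        * (1 + Real.exp (θ j) / (Real.exp (θ i) + Real.exp (θ j) + Real.exp (θ k))) with hqdef
    have key : ∀ p : Fin (n+1),
        (∑ e : Equiv.Perm (Fin n),
          plackettLuce θ (Equiv.Perm.decomposeFin.symm (p, e)) *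
            ((if (Equiv.Perm.decomposeFin.symm (p, e)).symm i
                < (Equiv.Perm.decomposeFin.symm (p, e)).symm j then 1 else 0)
            * (if (Equiv.Perm.decomposeFin.symm (p, e)).symm k
                < (Equiv.Perm.decomposeFin.symm (p, e)).symm j then 1 else 0)))
        = Real.exp (θ p) / T *
            (if p = i then Real.exp (θ k) / (Real.exp (θ k) + Real.exp (θ j))
             else if p = j then 0
             else if p = k then Real.exp (θ i) / (Real.exp (θ i) + Real.exp (θ j))
             else q) := by
      intro p
      by_cases hpi : p = i
      · subst hpi
        obtain ⟨j', hj'⟩ := g_exists p j (Ne.symm hij)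
        obtain ⟨k', hk'⟩ := g_exists p k (fun h => hik h.symm)
        have hkj' : k' ≠ j' := fun h => hkj (by rw [← hk', ← hj', h])
        have hind : ∀ e : Equiv.Perm (Fin n),
            ((if (Equiv.Perm.decomposeFin.symm (p, e)).symm p
                < (Equiv.Perm.decomposeFin.symm (p, e)).symm j then (1:ℝ) else 0)
            * (if (Equiv.Perm.decomposeFin.symm (p, e)).symm k
                < (Equiv.Perm.decomposeFin.symm (p, e)).symm j then (1:ℝ) else 0))
            = (if e.symm k' < e.symm j' then (1:ℝ) else 0) := by
          intro e
          rw [dec_symm_zero, ← hj', ← hk', dec_symm_succ, dec_symm_succ,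
            if_pos (Fin.succ_pos _), one_mul]
          simp [Fin.succ_lt_succ_iff]
        simp only [hind, pl_decompose, mul_assoc]
        rw [← Finset.mul_sum, pl_marg2 _ _ k' j' hkj', hk', hj']
        simp [hTdef]
      · by_cases hpj : p = j
        · subst hpj
          obtain ⟨i', hi'⟩ := g_exists p i hij
          have hind : ∀ e : Equiv.Perm (Fin n),
              ((if (Equiv.Perm.decomposeFin.symm (p, e)).symm i
                  < (Equiv.Perm.decomposeFin.symm (p, e)).symm p then (1:ℝ) else 0)
              * (if (Equiv.Perm.decomposeFin.symm (p, e)).symm k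
                  < (Equiv.Perm.decomposeFin.symm (p, e)).symm p then (1:ℝ) else 0))
              = 0 := by
            intro e
            rw [dec_symm_zero, ← hi', dec_symm_succ, if_neg (Fin.not_lt_zero _), zero_mul]
          simp only [hind, mul_zero, Finset.sum_const_zero, if_neg hpi, if_pos rfl, mul_zero]
          simp
        · by_cases hpk : p = k
          · subst hpk
            obtain ⟨j', hj'⟩ := g_exists p j (Ne.symm hkj)
            obtain ⟨i', hi'⟩ := g_exists p i hik
            have hij' : i' ≠ j' := fun h => hij (by rw [← hi', ← hj', h])
            have hind : ∀ e : Equiv.Perm (Fin n),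
                ((if (Equiv.Perm.decomposeFin.symm (p, e)).symm i
                    < (Equiv.Perm.decomposeFin.symm (p, e)).symm j then (1:ℝ) else 0)
                * (if (Equiv.Perm.decomposeFin.symm (p, e)).symm p
                    < (Equiv.Perm.decomposeFin.symm (p, e)).symm j then (1:ℝ) else 0))
                = (if e.symm i' < e.symm j' then (1:ℝ) else 0) := by
              intro e
              rw [dec_symm_zero, ← hj', ← hi', dec_symm_succ, dec_symm_succ,
                if_pos (Fin.succ_pos _), mul_one]
              simp [Fin.succ_lt_succ_iff]
            simp only [hind, pl_decompose, mul_assoc]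
            rw [← Finset.mul_sum, pl_marg2 _ _ i' j' hij', hi', hj',
              if_neg hpi, if_neg hpj]
            simp [hTdef]
          · obtain ⟨i', hi'⟩ := g_exists p i (fun h => hpi h.symm)
            obtain ⟨j', hj'⟩ := g_exists p j (fun h => hpj h.symm)
            obtain ⟨k', hk'⟩ := g_exists p k (fun h => hpk h.symm)
            have hij' : i' ≠ j' := fun h => hij (by rw [← hi', ← hj', h])
            have hkj' : k' ≠ j' := fun h => hkj (by rw [← hk', ← hj', h])
            have hik' : i' ≠ k' := fun h => hik (by rw [← hi', ← hk', h])
            have hind : ∀ e : Equiv.Perm (Fin n),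
                ((if (Equiv.Perm.decomposeFin.symm (p, e)).symm i
                    < (Equiv.Perm.decomposeFin.symm (p, e)).symm j then (1:ℝ) else 0)
                * (if (Equiv.Perm.decomposeFin.symm (p, e)).symm k
                    < (Equiv.Perm.decomposeFin.symm (p, e)).symm j then (1:ℝ) else 0))
                = ((if e.symm i' < e.symm j' then (1:ℝ) else 0)
                  * (if e.symm k' < e.symm j' then (1:ℝ) else 0)) := by
              intro e
              rw [← hi', ← hj', ← hk', dec_symm_succ, dec_symm_succ, dec_symm_succ]
              simp [Fin.succ_lt_succ_iff]
            simp only [hind, pl_decompose, mul_assoc]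
            rw [← Finset.mul_sum, ih _ i' j' k' hij' hkj' hik', hi', hj', hk',
              if_neg hpi, if_neg hpj, if_neg hpk, ← hqdef]
    simp only [key]
    rw [← Finset.add_sum_erase _ _ (Finset.mem_univ i), if_pos rfl]
    have hji : j ∈ Finset.univ.erase i := Finset.mem_erase.mpr ⟨Ne.symm hij, Finset.mem_univ j⟩
    rw [← Finset.add_sum_erase _ _ hji, if_neg (Ne.symm hij), if_pos rfl, mul_zero]
    have hki : k ∈ (Finset.univ.erase i).erase j :=
      Finset.mem_erase.mpr ⟨hkj, Finset.mem_erase.mpr ⟨fun h => hik h.symm, Finset.mem_univ k⟩⟩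
    rw [← Finset.add_sum_erase _ _ hki, if_neg (fun h => hik h.symm), if_neg hkj, if_pos rfl]
    have hrest : ∀ q' ∈ (((Finset.univ.erase i).erase j).erase k),
        Real.exp (θ q') / T *
          (if q' = i then Real.exp (θ k) / (Real.exp (θ k) + Real.exp (θ j))
           else if q' = j then 0
           else if q' = k then Real.exp (θ i) / (Real.exp (θ i) + Real.exp (θ j))
           else q)
          = Real.exp (θ q') / T * q := by
      intro q' hq'
      rw [Finset.mem_erase, Finset.mem_erase, Finset.mem_erase] at hq'
      rw [if_neg hq'.2.2.1, if_neg hq'.2.1, if_neg hq'.1]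
    rw [Finset.sum_congr rfl hrest]
    have hsum : ∑ u ∈ ((Finset.univ.erase i).erase j).erase k, Real.exp (θ u)
        = T - Real.exp (θ i) - Real.exp (θ j) - Real.exp (θ k) := by
      have h1 : T = Real.exp (θ i) + ∑ u ∈ Finset.univ.erase i, Real.exp (θ u) :=
        (Finset.add_sum_erase _ _ (Finset.mem_univ i)).symm
      have h2 : ∑ u ∈ Finset.univ.erase i, Real.exp (θ u)
          = Real.exp (θ j) + ∑ u ∈ (Finset.univ.erase i).erase j, Real.exp (θ u) :=
        (Finset.add_sum_erase _ _ hji).symm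
      have h3 : ∑ u ∈ (Finset.univ.erase i).erase j, Real.exp (θ u)
          = Real.exp (θ k) + ∑ u ∈ ((Finset.univ.erase i).erase j).erase k, Real.exp (θ u) :=
        (Finset.add_sum_erase _ _ hki).symm
      rw [h3] at h2; rw [h2] at h1; linarith
    have hEnd : ∑ u ∈ ((Finset.univ.erase i).erase j).erase k, Real.exp (θ u) / T * q
        = (T - Real.exp (θ i) - Real.exp (θ j) - Real.exp (θ k)) / T * q := by
      rw [← hsum, Finset.sum_div, Finset.sum_mul]
    rw [hEnd, hqdef]
    have h1 : 0 < Real.exp (θ i) + Real.exp (θ j) := by positivity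
    have h2 : 0 < Real.exp (θ k) + Real.exp (θ j) := by positivity
    have h3 : 0 < Real.exp (θ i) + Real.exp (θ j) + Real.exp (θ k) := by positivity
    field_simp
    ring

lemma sum_funbool {α : Type*} [Fintype α] [DecidableEq α] (f : α → Bool → ℝ) :
    ∑ b : α → Bool, ∏ a, f a (b a) = ∏ a, (f a true + f a false) := by
  have h : ∀ a : α, f a true + f a false = ∑ c : Bool, f a c := by
    intro a; rw [Fintype.sum_bool]
  simp_rw [h]
  rw [Finset.prod_univ_sum]
  rw [Fintype.piFinset_univ]

lemma sum_funbool_ind {α : Type*} [Fintype α] [DecidableEq α] (f : α → Bool → ℝ)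
    (h1 : ∀ a, f a true + f a false = 1) (s : Finset α) :
    ∑ b : α → Bool, (∏ a, f a (b a)) * (∏ a ∈ s, if b a then (1:ℝ) else 0)
      = ∏ a ∈ s, f a true := by
  have key : ∀ b : α → Bool,
      (∏ a, f a (b a)) * (∏ a ∈ s, if b a then (1:ℝ) else 0)
        = ∏ a, (f a (b a) * (if a ∈ s then (if b a then (1:ℝ) else 0) else 1)) := by
    intro b
    rw [Finset.prod_mul_distrib]
    congr 1
    rw [Finset.prod_ite_mem Finset.univ s, Finset.univ_inter]
  simp_rw [key]
  rw [sum_funbool (fun a c => f a c * (if a ∈ s then (if c then (1:ℝ) else 0) else 1))]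
  have h2 : ∀ a : α,
      (f a true * (if a ∈ s then (if (true:Bool) then (1:ℝ) else 0) else 1)
       + f a false * (if a ∈ s then (if (false:Bool) then (1:ℝ) else 0) else 1))
      = if a ∈ s then f a true else 1 := by
    intro a
    by_cases h : a ∈ s <;> simp [h, h1 a]
  rw [Finset.prod_congr rfl (fun a _ => h2 a)]
  rw [Finset.prod_ite_mem Finset.univ s, Finset.univ_inter]

lemma mask_sum {n : ℕ} (p : Fin n → Fin n → ℝ) (s : Finset (Fin n × Fin n)) :
    ∑ b : Fin n → Fin n → Bool,
      (∏ i, ∏ j, (if b i j then p i j else 1 - p i j))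
        * (∏ z ∈ s, if b z.1 z.2 then (1:ℝ) else 0)
      = ∏ z ∈ s, p z.1 z.2 := by
  rw [← Equiv.sum_comp (Equiv.curry (Fin n) (Fin n) Bool)
    (fun b => (∏ i, ∏ j, (if b i j then p i j else 1 - p i j))
        * (∏ z ∈ s, if b z.1 z.2 then (1:ℝ) else 0))]
  have key : ∀ c : Fin n × Fin n → Bool,
      (∏ i, ∏ j, (if (Equiv.curry (Fin n) (Fin n) Bool c) i j then p i j else 1 - p i j))
        * (∏ z ∈ s, if (Equiv.curry (Fin n) (Fin n) Bool c) z.1 z.2 then (1:ℝ) else 0)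
      = (∏ z : Fin n × Fin n, (if c z then p z.1 z.2 else 1 - p z.1 z.2))
        * (∏ z ∈ s, if c z then (1:ℝ) else 0) := by
    intro c
    congr 1
    · rw [Fintype.prod_prod_type]
      simp [Equiv.curry_apply, Function.curry]
  simp_rw [key]
  have := sum_funbool_ind (fun (z : Fin n × Fin n) (cc : Bool) =>
      if cc then p z.1 z.2 else 1 - p z.1 z.2) (by intro a; simp) s
  simpa using this

lemma bplEdge_eq {n : ℕ} (i j : Fin n) (ω : Equiv.Perm (Fin n) × (Fin n → Fin n → Bool)) :
    bplEdge i j ω = (if ω.1.symm i < ω.1.symm j then (1:ℝ) else 0)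
      * (if ω.2 i j then (1:ℝ) else 0) := by
  unfold bplEdge
  by_cases h1 : ω.2 i j <;> by_cases h2 : ω.1.symm i < ω.1.symm j <;> simp [h1, h2]

lemma bpl_norm {n : ℕ} (θ : Fin n → ℝ) (p : Fin n → Fin n → ℝ) :
    ∑ ω : Equiv.Perm (Fin n) × (Fin n → Fin n → Bool), bplProb θ p ω = 1 := by
  rw [Fintype.sum_prod_type]
  unfold bplProb
  have hmask : ∑ b : Fin n → Fin n → Bool,
      ∏ i, ∏ j, (if b i j then p i j else 1 - p i j) = 1 := by
    have := mask_sum p ∅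
    simpa using this
  have : ∀ π : Equiv.Perm (Fin n),
      ∑ b : Fin n → Fin n → Bool, plackettLuce θ π *
        ∏ i, ∏ j, (if b i j then p i j else 1 - p i j) = plackettLuce θ π := by
    intro π
    rw [← Finset.mul_sum, hmask, mul_one]
  simp only [this]
  exact pl_sum n θ

lemma bpl_moment1 {n : ℕ} (θ : Fin n → ℝ) (p : Fin n → Fin n → ℝ) (i j : Fin n)
    (hij : i ≠ j) :
    ∑ ω : Equiv.Perm (Fin n) × (Fin n → Fin n → Bool),
      bplProb θ p ω * bplEdge i j ω = bplEdgeExp θ p i j := by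
  rw [Fintype.sum_prod_type]
  have hmask : ∑ b : Fin n → Fin n → Bool,
      (∏ i', ∏ j', (if b i' j' then p i' j' else 1 - p i' j'))
        * (if b i j then (1:ℝ) else 0) = p i j := by
    have := mask_sum p {(i, j)}
    simpa using this
  have key : ∀ π : Equiv.Perm (Fin n),
      ∑ b : Fin n → Fin n → Bool, bplProb θ p (π, b) * bplEdge i j (π, b)
        = plackettLuce θ π * (if π.symm i < π.symm j then (1:ℝ) else 0) * p i j := by
    intro π
    have : ∀ b : Fin n → Fin n → Bool,
        bplProb θ p (π, b) * bplEdge i j (π, b)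
          = plackettLuce θ π * (if π.symm i < π.symm j then (1:ℝ) else 0)
            * ((∏ i', ∏ j', (if b i' j' then p i' j' else 1 - p i' j'))
              * (if b i j then (1:ℝ) else 0)) := by
      intro b
      rw [bplEdge_eq]
      unfold bplProb
      ring
    simp only [this]
    rw [← Finset.mul_sum, hmask]
  simp only [key]
  rw [← Finset.sum_mul, pl_marg2 n θ i j hij]
  unfold bplEdgeExp
  ring

lemma bpl_moment2 {n : ℕ} (θ : Fin n → ℝ) (p : Fin n → Fin n → ℝ) (i j k : Fin n)
    (hij : i ≠ j) (hkj : k ≠ j) (hik : i ≠ k) :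
    ∑ ω : Equiv.Perm (Fin n) × (Fin n → Fin n → Bool),
      bplProb θ p ω * (bplEdge i j ω * bplEdge k j ω)
      = bplEdgeExp θ p i j * bplEdgeExp θ p k j
        * (1 + Real.exp (θ j) / (Real.exp (θ i) + Real.exp (θ j) + Real.exp (θ k))) := by
  rw [Fintype.sum_prod_type]
  have hne : ((i, j) : Fin n × Fin n) ≠ (k, j) := by
    intro h; exact hik (congrArg Prod.fst h)
  have hmask : ∑ b : Fin n → Fin n → Bool,
      (∏ i', ∏ j', (if b i' j' then p i' j' else 1 - p i' j'))
        * ((if b i j then (1:ℝ) else 0) * (if b k j then (1:ℝ) else 0)) = p i j * p k j := by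
    have := mask_sum p {(i, j), (k, j)}
    rw [Finset.prod_pair hne] at this
    simp only [Finset.prod_pair hne] at this ⊢
    simpa using this
  have key : ∀ π : Equiv.Perm (Fin n),
      ∑ b : Fin n → Fin n → Bool, bplProb θ p (π, b) * (bplEdge i j (π, b) * bplEdge k j (π, b))
        = plackettLuce θ π * ((if π.symm i < π.symm j then (1:ℝ) else 0)
            * (if π.symm k < π.symm j then (1:ℝ) else 0)) * (p i j * p k j) := by
    intro π
    have : ∀ b : Fin n → Fin n → Bool,
        bplProb θ p (π, b) * (bplEdge i j (π, b) * bplEdge k j (π, b))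
          = plackettLuce θ π * ((if π.symm i < π.symm j then (1:ℝ) else 0)
              * (if π.symm k < π.symm j then (1:ℝ) else 0))
            * ((∏ i', ∏ j', (if b i' j' then p i' j' else 1 - p i' j'))
              * ((if b i j then (1:ℝ) else 0) * (if b k j then (1:ℝ) else 0))) := by
      intro b
      rw [bplEdge_eq, bplEdge_eq]
      unfold bplProb
      ring
    simp only [this]
    rw [← Finset.mul_sum, hmask]
  simp only [key]
  rw [← Finset.sum_mul, pl_marg3 n θ i j k hij hkj hik]
  unfold bplEdgeExp
  ring

lemma bpl_moment_diag {n : ℕ} (θ : Fin n → ℝ) (p : Fin n → Fin n → ℝ) (i j : Fin n)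
    (hij : i ≠ j) :
    ∑ ω : Equiv.Perm (Fin n) × (Fin n → Fin n → Bool),
      bplProb θ p ω * (bplEdge i j ω * bplEdge i j ω) = bplEdgeExp θ p i j := by
  have : ∀ ω : Equiv.Perm (Fin n) × (Fin n → Fin n → Bool),
      bplEdge i j ω * bplEdge i j ω = bplEdge i j ω := by
    intro ω; unfold bplEdge; by_cases h : ω.2 i j ∧ ω.1.symm i < ω.1.symm j <;> simp [h]
  simp only [this]
  exact bpl_moment1 θ p i j hij

lemma scalar_moment {n : ℕ} (θ : Fin n → ℝ) (p : Fin n → Fin n → ℝ) (j : Fin n)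
    (w : Fin n → ℝ) (X Y : Fin n → ℝ) (c1 c2 : ℝ) :
    ∑ ω : Equiv.Perm (Fin n) × (Fin n → Fin n → Bool),
      bplProb θ p ω * ((c1 - ∑ i ∈ Finset.univ.erase j, bplEdge i j ω * w i * X i)
                     * (c2 - ∑ k ∈ Finset.univ.erase j, bplEdge k j ω * w k * Y k))
    = (c1 - ∑ i ∈ Finset.univ.erase j, bplEdgeExp θ p i j * w i * X i)
      * (c2 - ∑ k ∈ Finset.univ.erase j, bplEdgeExp θ p k j * w k * Y k)
      + ∑ i ∈ Finset.univ.erase j,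
          bplEdgeExp θ p i j * (1 - bplEdgeExp θ p i j) * w i ^ 2 * (X i * Y i)
      + ∑ i ∈ Finset.univ.erase j, ∑ k ∈ (Finset.univ.erase j).erase i,
          (bplEdgeExp θ p i j * w i) * (bplEdgeExp θ p k j * w k)
            * (Real.exp (θ j) / (Real.exp (θ i) + Real.exp (θ j) + Real.exp (θ k)))
            * (X i * Y k) := by
  set E := Finset.univ.erase j with hE
  set P := bplProb θ p with hP
  set A := fun i => bplEdgeExp θ p i j with hA
  set ρ := fun i k => Real.exp (θ j) / (Real.exp (θ i) + Real.exp (θ j) + Real.exp (θ k))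
    with hρ
  -- expand the product under the expectation
  have expand : ∀ ω : Equiv.Perm (Fin n) × (Fin n → Fin n → Bool),
      P ω * ((c1 - ∑ i ∈ E, bplEdge i j ω * w i * X i)
           * (c2 - ∑ k ∈ E, bplEdge k j ω * w k * Y k))
      = P ω * (c1 * c2)
        - P ω * (c1 * ∑ k ∈ E, bplEdge k j ω * w k * Y k)
        - P ω * (c2 * ∑ i ∈ E, bplEdge i j ω * w i * X i)
        + P ω * (∑ i ∈ E, ∑ k ∈ E,
            (bplEdge i j ω * bplEdge k j ω) * ((w i * X i) * (w k * Y k))) := by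
    intro ω
    have hprod : (∑ i ∈ E, bplEdge i j ω * w i * X i)
        * (∑ k ∈ E, bplEdge k j ω * w k * Y k)
        = ∑ i ∈ E, ∑ k ∈ E,
            (bplEdge i j ω * bplEdge k j ω) * ((w i * X i) * (w k * Y k)) := by
      rw [Finset.sum_mul_sum]
      exact Finset.sum_congr rfl fun i _ => Finset.sum_congr rfl fun k _ => by ring
    rw [← hprod]; ring
  rw [Finset.sum_congr rfl fun ω _ => expand ω]
  rw [Finset.sum_add_distrib, Finset.sum_sub_distrib, Finset.sum_sub_distrib]
  have h1 : ∑ ω : Equiv.Perm (Fin n) × (Fin n → Fin n → Bool), P ω * (c1 * c2) = c1 * c2 := by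
    rw [← Finset.sum_mul, hP, bpl_norm, one_mul]
  have h2 : ∑ ω : Equiv.Perm (Fin n) × (Fin n → Fin n → Bool),
      P ω * (c1 * ∑ k ∈ E, bplEdge k j ω * w k * Y k)
      = c1 * ∑ k ∈ E, A k * w k * Y k := by
    have step : ∀ ω : Equiv.Perm (Fin n) × (Fin n → Fin n → Bool),
        P ω * (c1 * ∑ k ∈ E, bplEdge k j ω * w k * Y k)
        = ∑ k ∈ E, (P ω * bplEdge k j ω) * (c1 * (w k * Y k)) := by
      intro ω
      rw [Finset.mul_sum, Finset.mul_sum]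
      exact Finset.sum_congr rfl fun k _ => by ring
    rw [Finset.sum_congr rfl fun ω _ => step ω, Finset.sum_comm]
    have inner : ∀ k ∈ E, ∑ ω : Equiv.Perm (Fin n) × (Fin n → Fin n → Bool),
        (P ω * bplEdge k j ω) * (c1 * (w k * Y k)) = A k * (c1 * (w k * Y k)) := by
      intro k hk
      rw [← Finset.sum_mul, hP, bpl_moment1 θ p k j (Finset.mem_erase.mp hk).1]
    rw [Finset.sum_congr rfl inner, Finset.mul_sum]
    exact Finset.sum_congr rfl fun k _ => by ring
  have h3 : ∑ ω : Equiv.Perm (Fin n) × (Fin n → Fin n → Bool),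
      P ω * (c2 * ∑ i ∈ E, bplEdge i j ω * w i * X i)
      = c2 * ∑ i ∈ E, A i * w i * X i := by
    have step : ∀ ω : Equiv.Perm (Fin n) × (Fin n → Fin n → Bool),
        P ω * (c2 * ∑ i ∈ E, bplEdge i j ω * w i * X i)
        = ∑ i ∈ E, (P ω * bplEdge i j ω) * (c2 * (w i * X i)) := by
      intro ω
      rw [Finset.mul_sum, Finset.mul_sum]
      exact Finset.sum_congr rfl fun i _ => by ring
    rw [Finset.sum_congr rfl fun ω _ => step ω, Finset.sum_comm]
    have inner : ∀ i ∈ E, ∑ ω : Equiv.Perm (Fin n) × (Fin n → Fin n → Bool),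
        (P ω * bplEdge i j ω) * (c2 * (w i * X i)) = A i * (c2 * (w i * X i)) := by
      intro i hi
      rw [← Finset.sum_mul, hP, bpl_moment1 θ p i j (Finset.mem_erase.mp hi).1]
    rw [Finset.sum_congr rfl inner, Finset.mul_sum]
    exact Finset.sum_congr rfl fun i _ => by ring
  have h4 : ∑ ω : Equiv.Perm (Fin n) × (Fin n → Fin n → Bool),
      P ω * (∑ i ∈ E, ∑ k ∈ E,
          (bplEdge i j ω * bplEdge k j ω) * ((w i * X i) * (w k * Y k)))
      = ∑ i ∈ E, (A i * ((w i * X i) * (w i * Y i))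
          + ∑ k ∈ E.erase i,
              (A i * A k * (1 + ρ i k)) * ((w i * X i) * (w k * Y k))) := by
    have step : ∀ ω : Equiv.Perm (Fin n) × (Fin n → Fin n → Bool),
        P ω * (∑ i ∈ E, ∑ k ∈ E,
            (bplEdge i j ω * bplEdge k j ω) * ((w i * X i) * (w k * Y k)))
        = ∑ i ∈ E, ∑ k ∈ E,
            (P ω * (bplEdge i j ω * bplEdge k j ω)) * ((w i * X i) * (w k * Y k)) := by
      intro ω
      rw [Finset.mul_sum]
      refine Finset.sum_congr rfl fun i _ => ?_
      rw [Finset.mul_sum]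
      exact Finset.sum_congr rfl fun k _ => by ring
    rw [Finset.sum_congr rfl fun ω _ => step ω, Finset.sum_comm]
    refine Finset.sum_congr rfl fun i hi => ?_
    rw [Finset.sum_comm]
    have hij : i ≠ j := (Finset.mem_erase.mp hi).1
    -- split the inner sum over k at k = i
    rw [← Finset.add_sum_erase _ _ hi]
    congr 1
    · rw [← Finset.sum_mul, hP, bpl_moment_diag θ p i j hij]
    · refine Finset.sum_congr rfl fun k hk => ?_
      have hki : k ≠ i := (Finset.mem_erase.mp hk).1
      have hkj : k ≠ j := (Finset.mem_erase.mp (Finset.mem_erase.mp hk).2).1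
      rw [← Finset.sum_mul, hP, bpl_moment2 θ p i j k hij hkj (fun h => hki h.symm)]
  rw [h1, h2, h3, h4]
  -- now pure algebra
  have hbar : (∑ i ∈ E, A i * w i * X i) * (∑ k ∈ E, A k * w k * Y k)
      = ∑ i ∈ E, (A i * ((w i * X i) * (w i * Y i)) * A i
          + ∑ k ∈ E.erase i, (A i * A k) * ((w i * X i) * (w k * Y k))) := by
    rw [Finset.sum_mul_sum]
    refine Finset.sum_congr rfl fun i hi => ?_
    rw [← Finset.add_sum_erase _ _ hi]
    congr 1
    · ring
    · exact Finset.sum_congr rfl fun k _ => by ring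
  have goal_rhs : (c1 - ∑ i ∈ E, A i * w i * X i) * (c2 - ∑ k ∈ E, A k * w k * Y k)
      = c1 * c2 - c1 * ∑ k ∈ E, A k * w k * Y k - c2 * ∑ i ∈ E, A i * w i * X i
        + (∑ i ∈ E, A i * w i * X i) * (∑ k ∈ E, A k * w k * Y k) := by ring
  rw [goal_rhs, hbar]
  have final : ∀ i ∈ E,
      A i * ((w i * X i) * (w i * Y i))
        + ∑ k ∈ E.erase i, (A i * A k * (1 + ρ i k)) * ((w i * X i) * (w k * Y k))
      = (A i * ((w i * X i) * (w i * Y i)) * A i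
          + ∑ k ∈ E.erase i, (A i * A k) * ((w i * X i) * (w k * Y k)))
        + A i * (1 - A i) * w i ^ 2 * (X i * Y i)
        + ∑ k ∈ E.erase i, (A i * w i) * (A k * w k) * ρ i k * (X i * Y k) := by
    intro i _
    have : ∑ k ∈ E.erase i, (A i * A k * (1 + ρ i k)) * ((w i * X i) * (w k * Y k))
        = ∑ k ∈ E.erase i, ((A i * A k) * ((w i * X i) * (w k * Y k))
            + (A i * w i) * (A k * w k) * ρ i k * (X i * Y k)) := by
      exact Finset.sum_congr rfl fun k _ => by ring
    rw [this, Finset.sum_add_distrib]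
    ring
  rw [Finset.sum_congr rfl final]
  rw [Finset.sum_add_distrib, Finset.sum_add_distrib]
  ring

/-- Multivariate version: with `μ_j = b_j + Σ_{i ≠ j} a_{ij} w_{ij} x_i` and
`μ̄_j = b_j + Σ_{i ≠ j} E[a_{ij}] w_{ij} x_i`, the expectation (over the
Bernoulli-Plackett-Luce model) of the quadratic form
`⟨Σ_j⁻¹(x_j − μ_j), x_j − μ_j⟩` equals
`⟨Σ_j⁻¹(x_j − μ̄_j), x_j − μ̄_j⟩ + Σ_{i≠j} E[a_{ij}](1−E[a_{ij}]) w_{ij}² ⟨Σ_j⁻¹ x_i, x_i⟩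
 + Σ_{i≠j} Σ_{k≠j,k≠i} (E[a_{ij}] w_{ij})(E[a_{kj}] w_{kj})
     (e^{θ_j}/(e^{θ_i}+e^{θ_j}+e^{θ_k})) ⟨Σ_j⁻¹ x_i, x_k⟩`,
where `Σ_j` is a symmetric positive definite `d × d` matrix. -/
theorem bpl_expected_quadratic_form {n d : ℕ} (hn : 3 ≤ n) (hd : 1 ≤ d)
    (θ : Fin n → ℝ) (p : Fin n → Fin n → ℝ) (hp : ∀ a b, 0 ≤ p a b ∧ p a b ≤ 1)
    (j : Fin n) (x : Fin n → Fin d → ℝ) (w : Fin n → ℝ) (b : Fin d → ℝ)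
    (S : Matrix (Fin d) (Fin d) ℝ) (hS : S.PosDef) :
    (∑ ω : Equiv.Perm (Fin n) × (Fin n → Fin n → Bool),
        bplProb θ p ω *
          ∑ t : Fin d,
            (S⁻¹.mulVec
              (fun s => x j s - (b s + ∑ i ∈ Finset.univ.erase j, bplEdge i j ω * w i * x i s))) t
            * (x j t - (b t + ∑ i ∈ Finset.univ.erase j, bplEdge i j ω * w i * x i t)))
      = (∑ t : Fin d,
            (S⁻¹.mulVec
              (fun s => x j s - (b s + ∑ i ∈ Finset.univ.erase j, bplEdgeExp θ p i j * w i * x i s))) t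
            * (x j t - (b t + ∑ i ∈ Finset.univ.erase j, bplEdgeExp θ p i j * w i * x i t)))
        + (∑ i ∈ Finset.univ.erase j,
            bplEdgeExp θ p i j * (1 - bplEdgeExp θ p i j) * w i ^ 2
              * ∑ t : Fin d, (S⁻¹.mulVec (x i)) t * x i t)
        + ∑ i ∈ Finset.univ.erase j, ∑ k ∈ (Finset.univ.erase j).erase i,
            (bplEdgeExp θ p i j * w i) * (bplEdgeExp θ p k j * w k)
              * (Real.exp (θ j) / (Real.exp (θ i) + Real.exp (θ j) + Real.exp (θ k)))
              * ∑ t : Fin d, (S⁻¹.mulVec (x i)) t * x k t := by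
  classical
  set M := S⁻¹ with hMdef
  set E := Finset.univ.erase j with hE
  have hmv : ∀ (f : Fin d → ℝ) (t : Fin d), M.mulVec f t = ∑ s, M t s * f s := by
    intro f t; rfl
  simp only [hmv, sub_add_eq_sub_sub]
  set A := fun i => bplEdgeExp θ p i j with hA
  set ρ := fun i k => Real.exp (θ j) / (Real.exp (θ i) + Real.exp (θ j) + Real.exp (θ k))
    with hρ
  -- LHS reorganization
  have stepL : ∀ ω : Equiv.Perm (Fin n) × (Fin n → Fin n → Bool),
      bplProb θ p ω *
        ∑ t, (∑ s, M t s * (x j s - b s - ∑ i ∈ E, bplEdge i j ω * w i * x i s))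
          * (x j t - b t - ∑ i ∈ E, bplEdge i j ω * w i * x i t)
      = ∑ t, ∑ s, M t s * (bplProb θ p ω *
          ((x j s - b s - ∑ i ∈ E, bplEdge i j ω * w i * x i s)
            * (x j t - b t - ∑ i ∈ E, bplEdge i j ω * w i * x i t))) := by
    intro ω
    rw [Finset.mul_sum]
    refine Finset.sum_congr rfl fun t _ => ?_
    rw [Finset.sum_mul, Finset.mul_sum]
    exact Finset.sum_congr rfl fun s _ => by ring
  rw [Finset.sum_congr rfl fun ω _ => stepL ω, Finset.sum_comm]
  rw [Finset.sum_congr rfl fun t _ => Finset.sum_comm]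
  have inner : ∀ t s : Fin d,
      ∑ ω : Equiv.Perm (Fin n) × (Fin n → Fin n → Bool),
        bplProb θ p ω *
          ((x j s - b s - ∑ i ∈ E, bplEdge i j ω * w i * x i s)
            * (x j t - b t - ∑ i ∈ E, bplEdge i j ω * w i * x i t))
      = (x j s - b s - ∑ i ∈ E, A i * w i * x i s)
          * (x j t - b t - ∑ i ∈ E, A i * w i * x i t)
        + ∑ i ∈ E, A i * (1 - A i) * w i ^ 2 * (x i s * x i t)
        + ∑ i ∈ E, ∑ k ∈ E.erase i,
            (A i * w i) * (A k * w k) * ρ i k * (x i s * x k t) :=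
    fun t s => scalar_moment θ p j w (fun i => x i s) (fun i => x i t)
      (x j s - b s) (x j t - b t)
  have inner2 : ∀ t : Fin d, ∀ s : Fin d,
      ∑ ω : Equiv.Perm (Fin n) × (Fin n → Fin n → Bool),
        M t s * (bplProb θ p ω *
          ((x j s - b s - ∑ i ∈ E, bplEdge i j ω * w i * x i s)
            * (x j t - b t - ∑ i ∈ E, bplEdge i j ω * w i * x i t)))
      = M t s * ((x j s - b s - ∑ i ∈ E, A i * w i * x i s)
          * (x j t - b t - ∑ i ∈ E, A i * w i * x i t))
        + M t s * (∑ i ∈ E, A i * (1 - A i) * w i ^ 2 * (x i s * x i t))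
        + M t s * (∑ i ∈ E, ∑ k ∈ E.erase i,
            (A i * w i) * (A k * w k) * ρ i k * (x i s * x k t)) := by
    intro t s
    rw [← Finset.mul_sum, inner t s]
    ring
  rw [Finset.sum_congr rfl fun t _ => Finset.sum_congr rfl fun s _ => inner2 t s]
  simp only [Finset.sum_add_distrib]
  congr 1
  · congr 1
    -- first term
    · refine Finset.sum_congr rfl fun t _ => ?_
      rw [Finset.sum_mul]
      exact Finset.sum_congr rfl fun s _ => by ring
    -- second term: exchange sums
    · have swap : ∀ t : Fin d, ∀ s : Fin d,
          M t s * (∑ i ∈ E, A i * (1 - A i) * w i ^ 2 * (x i s * x i t))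
          = ∑ i ∈ E, A i * (1 - A i) * w i ^ 2 * (M t s * (x i s * x i t)) := by
        intro t s
        rw [Finset.mul_sum]
        exact Finset.sum_congr rfl fun i _ => by ring
      rw [Finset.sum_congr rfl fun t _ => Finset.sum_congr rfl fun s _ => swap t s]
      rw [Finset.sum_congr rfl fun t _ => Finset.sum_comm, Finset.sum_comm]
      refine Finset.sum_congr rfl fun i _ => ?_
      conv_rhs => rw [Finset.mul_sum]
      refine Finset.sum_congr rfl fun t _ => ?_
      conv_rhs => rw [Finset.sum_mul, Finset.mul_sum]
      exact Finset.sum_congr rfl fun s _ => by ring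
  -- third term
  · have swap : ∀ t : Fin d, ∀ s : Fin d,
        M t s * (∑ i ∈ E, ∑ k ∈ E.erase i,
            (A i * w i) * (A k * w k) * ρ i k * (x i s * x k t))
        = ∑ i ∈ E, ∑ k ∈ E.erase i,
            (A i * w i) * (A k * w k) * ρ i k * (M t s * (x i s * x k t)) := by
      intro t s
      rw [Finset.mul_sum]
      refine Finset.sum_congr rfl fun i _ => ?_
      rw [Finset.mul_sum]
      exact Finset.sum_congr rfl fun k _ => by ring
    rw [Finset.sum_congr rfl fun t _ => Finset.sum_congr rfl fun s _ => swap t s]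
    rw [Finset.sum_congr rfl fun t _ => Finset.sum_comm, Finset.sum_comm]
    refine Finset.sum_congr rfl fun i _ => ?_
    rw [Finset.sum_congr rfl fun t _ => Finset.sum_comm, Finset.sum_comm]
    refine Finset.sum_congr rfl fun k _ => ?_
    conv_rhs => rw [Finset.mul_sum]
    refine Finset.sum_congr rfl fun t _ => ?_
    conv_rhs => rw [Finset.sum_mul, Finset.mul_sum]
    exact Finset.sum_congr rfl fun s _ => by ring
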